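/- Let ϑ be a real number with sin(2ϑ) ≠ 0 (i.e., ϑ is not a multiple of π/2) and let p be a real number with p > 2. Then the series ∑_{n=1}^{∞} (2n+1) · | (∑_{k=0}^{n} (2k)! (2n−2k)! binomial(n,k)² exp(4ikϑ)) / (∑_{k=0}^{n} (2k)! (2n−2k)! binomial(n,k)²) |^{2p} converges. -/

import Mathlib

/-- `S_n(ϑ) = ∑_{k=0}^{n} (2k)! (2n−2k)! C(n,k)² e^{4ikϑ}`. -/
noncomputable def Sseq (n : ℕ) (θ : ℝ) : ℂ :=
  ∑ k ∈ Finset.range (n + 1),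
    ((2 * k).factorial : ℂ) * ((2 * (n - k)).factorial : ℂ) * ((n.choose k : ℂ)) ^ 2 *
      Complex.exp (4 * k * θ * Complex.I)

open Finset

noncomputable def aseq (n : ℕ) : ℝ := n.centralBinom / 4 ^ n

lemma aseq_pos (n : ℕ) : 0 < aseq n := by
  have := Nat.centralBinom_pos n
  unfold aseq
  positivity

lemma aseq_zero : aseq 0 = 1 := by simp [aseq, Nat.centralBinom]

lemma aseq_succ (n : ℕ) :
    aseq (n + 1) = aseq n * ((2 * n + 1) / (2 * n + 2)) := by
  have h := Nat.succ_mul_centralBinom_succ n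
  have h' : ((n : ℝ) + 1) * (Nat.centralBinom (n + 1) : ℝ)
      = 2 * (2 * n + 1) * (Nat.centralBinom n : ℝ) := by exact_mod_cast h
  have h4 : (4 : ℝ) ^ (n + 1) ≠ 0 := by positivity
  have hn : ((n : ℝ) + 1) ≠ 0 := by positivity
  unfold aseq
  rw [pow_succ]
  field_simp
  nlinarith [h', pow_pos (show (0:ℝ) < 4 by norm_num) n]

lemma aseq_sq_le (n : ℕ) : (2 * (n:ℝ) + 1) * aseq n ^ 2 ≤ 1 := by
  induction n with
  | zero => simp [aseq_zero]
  | succ n ih =>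
      rw [aseq_succ]
      have hn : (0:ℝ) ≤ (n:ℝ) := Nat.cast_nonneg n
      have e : (2 * ((n:ℝ)+1) + 1) * (aseq n * ((2 * (n:ℝ) + 1) / (2 * n + 2))) ^ 2
          = ((2*(n:ℝ)+3) * (2*n+1) * ((2*(n:ℝ)+1) * aseq n ^ 2)) / (2*n+2)^2 := by
        field_simp; ring
      push_cast
      rw [e, div_le_one (by positivity)]
      nlinarith [mul_le_mul_of_nonneg_left ih
        (show (0:ℝ) ≤ (2*(n:ℝ)+3) * (2*n+1) by positivity)]

lemma aseq_sq_ge (n : ℕ) (h : 1 ≤ n) : 1 ≤ 4 * (n:ℝ) * aseq n ^ 2 := by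
  induction n with
  | zero => omega
  | succ n ih =>
      rcases Nat.eq_or_lt_of_le h with h0 | h0
      · have : n = 0 := by omega
        subst this
        have : aseq 1 = 1 / 2 := by rw [aseq_succ, aseq_zero]; norm_num
        rw [this]; norm_num
      · have hn1 : 1 ≤ n := by omega
        have ih' := ih hn1
        have hn : (1:ℝ) ≤ (n:ℝ) := by exact_mod_cast hn1
        rw [aseq_succ]
        have e : 4 * ((n:ℝ)+1) * (aseq n * ((2 * (n:ℝ) + 1) / (2 * n + 2))) ^ 2
            = (((n:ℝ)+1) * (2*n+1)^2 * (4 * (n:ℝ) * aseq n ^ 2)) / ((n:ℝ) * (2*n+2)^2) := by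
          field_simp
        push_cast
        rw [e, le_div_iff₀ (by positivity)]
        nlinarith [mul_le_mul_of_nonneg_left ih'
          (show (0:ℝ) ≤ ((n:ℝ)+1) * (2*n+1)^2 by positivity)]

lemma d_dec (k m : ℕ) (h : k ≤ m) :
    aseq (k + 1) * aseq m ≤ aseq k * aseq (m + 1) := by
  rw [aseq_succ k, aseq_succ m]
  have pk := aseq_pos k
  have pm := aseq_pos m
  have hc : ((2 * (k:ℝ) + 1) / (2 * k + 2)) ≤ ((2 * (m:ℝ) + 1) / (2 * m + 2)) := by
    rw [div_le_div_iff₀ (by positivity) (by positivity)]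
    have : (k:ℝ) ≤ m := by exact_mod_cast h
    nlinarith
  calc aseq k * ((2 * (k:ℝ) + 1) / (2 * k + 2)) * aseq m
      = (aseq k * aseq m) * ((2 * (k:ℝ) + 1) / (2 * k + 2)) := by ring
    _ ≤ (aseq k * aseq m) * ((2 * (m:ℝ) + 1) / (2 * m + 2)) := by
        apply mul_le_mul_of_nonneg_left hc (by positivity)
    _ = aseq k * (aseq m * ((2 * (m:ℝ) + 1) / (2 * m + 2))) := by ring

lemma d_inc (k m : ℕ) (h : m ≤ k) :
    aseq k * aseq (m + 1) ≤ aseq (k + 1) * aseq m := by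
  have := d_dec m k h
  nlinarith [this]

noncomputable def dseq (n k : ℕ) : ℝ := aseq k * aseq (n - k)

lemma dseq_pos (n k : ℕ) : 0 < dseq n k := mul_pos (aseq_pos _) (aseq_pos _)

lemma dseq_zero (n : ℕ) : dseq n 0 = aseq n := by
  simp [dseq, aseq_zero]

lemma dseq_last (n : ℕ) : dseq n n = aseq n := by
  simp [dseq, aseq_zero]

lemma var_bound (n : ℕ) :
    ∑ i ∈ Finset.range n, |dseq n (i + 1) - dseq n i| ≤ 2 * aseq n := by
  rcases Nat.eq_zero_or_pos n with rfl | hn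
  · simp
    have := aseq_pos 0
    linarith
  · set h := (n + 1) / 2 with hhdef
    have hhn : h ≤ n := by omega
    rw [← Finset.sum_range_add_sum_Ico _ hhn]
    have dec : ∀ i ∈ Finset.range h,
        |dseq n (i + 1) - dseq n i| = dseq n i - dseq n (i + 1) := by
      intro i hi
      simp only [Finset.mem_range] at hi
      have hle : dseq n (i + 1) ≤ dseq n i := by
        have e1 : dseq n (i + 1) = aseq (i + 1) * aseq (n - i - 1) := by
          unfold dseq; rw [show n - (i + 1) = n - i - 1 from by omega]
        have e2 : dseq n i = aseq i * aseq ((n - i - 1) + 1) := by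
          have hni : n - i = (n - i - 1) + 1 := by omega
          simp only [dseq]
          conv_lhs => rw [hni]
        rw [e1, e2]
        exact d_dec i (n - i - 1) (by omega)
      rw [abs_of_nonpos (sub_nonpos.mpr hle), neg_sub]
    have inc : ∀ i ∈ Finset.Ico h n,
        |dseq n (i + 1) - dseq n i| = dseq n (i + 1) - dseq n i := by
      intro i hi
      simp only [Finset.mem_Ico] at hi
      have hle : dseq n i ≤ dseq n (i + 1) := by
        have e1 : dseq n (i + 1) = aseq (i + 1) * aseq (n - i - 1) := by
          unfold dseq; rw [show n - (i + 1) = n - i - 1 from by omega]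
        have e2 : dseq n i = aseq i * aseq ((n - i - 1) + 1) := by
          have hni : n - i = (n - i - 1) + 1 := by omega
          simp only [dseq]
          conv_lhs => rw [hni]
        rw [e1, e2]
        exact d_inc i (n - i - 1) (by omega)
      rw [abs_of_nonneg (sub_nonneg.mpr hle)]
    rw [Finset.sum_congr rfl dec, Finset.sum_congr rfl inc]
    rw [Finset.sum_range_sub' (fun i => dseq n i) h]
    rw [Finset.sum_Ico_eq_sum_range]
    have : ∑ i ∈ Finset.range (n - h), (dseq n (h + i + 1) - dseq n (h + i))
        = dseq n n - dseq n h := by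
      have := Finset.sum_range_sub (fun j => dseq n (h + j)) (n - h)
      simp only [Nat.add_zero] at this
      rw [show h + (n - h) = n by omega] at this
      rw [← this]
      apply Finset.sum_congr rfl
      intro i _
      rw [add_assoc]
    rw [this, dseq_zero, dseq_last]
    have := dseq_pos n h
    linarith

lemma dseq_ge (n k : ℕ) (hk1 : 1 ≤ k) (hkn : k < n) : 1 / (2 * (n:ℝ)) ≤ dseq n k := by
  set j := n - k with hj
  have hj1 : 1 ≤ j := by omega
  have hkj : k + j = n := by omega
  have h1 := aseq_sq_ge k hk1
  have h2 := aseq_sq_ge j hj1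
  have pk := aseq_pos k
  have pj := aseq_pos j
  have hcast : (k:ℝ) + j = n := by exact_mod_cast hkj
  have hk' : (1:ℝ) ≤ (k:ℝ) := by exact_mod_cast hk1
  have hj' : (1:ℝ) ≤ (j:ℝ) := by exact_mod_cast hj1
  have hnpos : (0:ℝ) < n := by nlinarith
  have hsq : (1 / (2 * (n:ℝ))) ^ 2 ≤ (aseq k * aseq j) ^ 2 := by
    have h3 : 1 ≤ (4 * (k:ℝ) * aseq k ^ 2) * (4 * (j:ℝ) * aseq j ^ 2) := by
      nlinarith [sq_nonneg (aseq k), sq_nonneg (aseq j)]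
    have h4 : 4 * (k:ℝ) * j ≤ (n:ℝ) ^ 2 := by nlinarith [sq_nonneg ((k:ℝ) - j)]
    rw [div_pow, one_pow, div_le_iff₀ (by positivity)]
    have : (1:ℝ) ≤ (aseq k * aseq j)^2 * (16 * k * j) := by nlinarith
    nlinarith [sq_nonneg (aseq k * aseq j)]
  have := le_of_pow_le_pow_left₀ (n := 2) (by norm_num) (by positivity) hsq
  simpa [dseq, ← hj] using this

lemma sum_d_ge (n : ℕ) : 1 / 4 ≤ ∑ k ∈ Finset.range (n + 1), dseq n k := by
  match n with
  | 0 => simp [dseq_zero, aseq_zero]; norm_num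
  | 1 =>
    have h1 : aseq 1 = 1 / 2 := by rw [aseq_succ, aseq_zero]; norm_num
    simp [Finset.sum_range_succ, dseq, aseq_zero, h1]
    norm_num
  | (m + 2) =>
    set n := m + 2 with hn
    have hsub : Finset.Ico 1 n ⊆ Finset.range (n + 1) := by
      intro x hx
      simp only [Finset.mem_Ico] at hx
      simp only [Finset.mem_range]
      omega
    have h1 : ∑ k ∈ Finset.Ico 1 n, dseq n k ≤ ∑ k ∈ Finset.range (n + 1), dseq n k :=
      Finset.sum_le_sum_of_subset_of_nonneg hsub (fun i _ _ => (dseq_pos n i).le)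
    have h2 : ((n:ℝ) - 1) * (1 / (2 * (n:ℝ))) ≤ ∑ k ∈ Finset.Ico 1 n, dseq n k := by
      have := Finset.card_nsmul_le_sum (Finset.Ico 1 n) (fun k => dseq n k)
        (1 / (2 * (n:ℝ)))
        (fun k hk => by
          simp only [Finset.mem_Ico] at hk
          exact dseq_ge n k hk.1 hk.2)
      rw [Nat.card_Ico] at this
      have hc : ((n - 1 : ℕ) : ℝ) = (n:ℝ) - 1 := by
        have : 1 ≤ n := by omega
        push_cast [this]; ring
      rw [nsmul_eq_mul, hc] at this
      exact this
    have hn2 : (2:ℝ) ≤ (n:ℝ) := by exact_mod_cast (by omega : 2 ≤ n)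
    have : (1:ℝ) / 4 ≤ ((n:ℝ) - 1) * (1 / (2 * (n:ℝ))) := by
      rw [mul_one_div, le_div_iff₀ (by linarith)]
      linarith
    linarith

lemma nat_key (n k : ℕ) (h : k ≤ n) :
    (2 * k).factorial * (2 * (n - k)).factorial * (n.choose k) ^ 2
      = n.factorial ^ 2 * (Nat.centralBinom k * Nat.centralBinom (n - k)) := by
  have h1 := Nat.choose_mul_factorial_mul_factorial (show k ≤ 2 * k by omega)
  have h2 := Nat.choose_mul_factorial_mul_factorial (show n - k ≤ 2 * (n - k) by omega)
  have h3 := Nat.choose_mul_factorial_mul_factorial h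
  rw [show 2 * k - k = k by omega] at h1
  rw [show 2 * (n - k) - (n - k) = n - k by omega] at h2
  rw [Nat.centralBinom_eq_two_mul_choose, Nat.centralBinom_eq_two_mul_choose]
  rw [← h1, ← h2, ← h3]
  ring

lemma cast_key (n k : ℕ) (h : k ≤ n) :
    ((2 * k).factorial : ℂ) * ((2 * (n - k)).factorial : ℂ) * ((n.choose k : ℂ)) ^ 2
      = (n.factorial : ℂ) ^ 2 * 4 ^ n * ((aseq k * aseq (n - k) : ℝ) : ℂ) := by
  have h4 : ((aseq k * aseq (n - k) : ℝ) : ℂ)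
      = ((Nat.centralBinom k : ℂ) * (Nat.centralBinom (n - k) : ℂ)) / 4 ^ n := by
    unfold aseq
    push_cast
    rw [div_mul_div_comm, ← pow_add, show k + (n - k) = n by omega]
  rw [h4]
  have h40 : ((4:ℂ)) ^ n ≠ 0 := pow_ne_zero _ (by norm_num)
  have := nat_key n k h
  have hc : ((2 * k).factorial : ℂ) * ((2 * (n - k)).factorial : ℂ) * ((n.choose k : ℂ)) ^ 2
      = (n.factorial : ℂ) ^ 2 * ((Nat.centralBinom k : ℂ) * (Nat.centralBinom (n - k) : ℂ)) := by
    exact_mod_cast congrArg (Nat.cast (R := ℂ)) this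
  rw [hc]
  field_simp

lemma Sseq_eq (n : ℕ) (θ : ℝ) :
    Sseq n θ = (n.factorial : ℂ) ^ 2 * 4 ^ n *
      ∑ k ∈ Finset.range (n + 1),
        ((dseq n k : ℝ) : ℂ) * Complex.exp (4 * k * θ * Complex.I) := by
  unfold Sseq
  rw [Finset.mul_sum]
  apply Finset.sum_congr rfl
  intro k hk
  have hk' : k ≤ n := by simpa [Nat.lt_succ_iff] using hk
  rw [cast_key n k hk']
  unfold dseq
  ring

lemma exp_pow (θ : ℝ) (k : ℕ) :
    Complex.exp (4 * k * θ * Complex.I) = Complex.exp (4 * θ * Complex.I) ^ k := by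
  rw [← Complex.exp_nat_mul]
  congr 1
  push_cast
  ring

lemma abs_z_sub_one (θ : ℝ) :
    ‖Complex.exp (4 * θ * Complex.I) - 1‖ = 2 * |Real.sin (2 * θ)| := by
  have he : (4 * (θ:ℂ) * Complex.I) = ((4 * θ : ℝ) : ℂ) * Complex.I := by push_cast; ring
  rw [he, Complex.exp_mul_I, ← Complex.ofReal_cos, ← Complex.ofReal_sin]
  have : ((Real.cos (4 * θ) : ℝ) : ℂ) + ((Real.sin (4 * θ) : ℝ) : ℂ) * Complex.I - 1
      = ((Real.cos (4 * θ) - 1 : ℝ) : ℂ) + ((Real.sin (4 * θ) : ℝ) : ℂ) * Complex.I := by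
    push_cast
    ring
  rw [this, Complex.norm_add_mul_I]
  have hcos : Real.cos (4 * θ) = 1 - 2 * Real.sin (2 * θ) ^ 2 := by
    rw [show (4:ℝ) * θ = 2 * (2 * θ) by ring, Real.cos_two_mul]
    have := Real.sin_sq_add_cos_sq (2 * θ)
    nlinarith
  have hsin : Real.sin (4 * θ) = 2 * Real.sin (2 * θ) * Real.cos (2 * θ) := by
    rw [show (4:ℝ) * θ = 2 * (2 * θ) by ring, Real.sin_two_mul]
  have hid : (Real.cos (4 * θ) - 1) ^ 2 + Real.sin (4 * θ) ^ 2
      = (2 * |Real.sin (2 * θ)|) ^ 2 := by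
    rw [hcos, hsin]
    have h1 := Real.sin_sq_add_cos_sq (2 * θ)
    have h2 : |Real.sin (2 * θ)| ^ 2 = Real.sin (2 * θ) ^ 2 := sq_abs _
    nlinarith
  rw [hid, Real.sqrt_sq (by positivity)]

lemma geom_bound (θ : ℝ) (hθ : Real.sin (2 * θ) ≠ 0) (m : ℕ) :
    ‖∑ i ∈ Finset.range m, Complex.exp (4 * θ * Complex.I) ^ i‖
      ≤ 1 / |Real.sin (2 * θ)| := by
  set z := Complex.exp (4 * θ * Complex.I) with hz
  have hs : 0 < |Real.sin (2 * θ)| := abs_pos.mpr hθ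
  have hz1 : z ≠ 1 := by
    intro h
    have := abs_z_sub_one θ
    rw [← hz, h] at this
    simp only [sub_self, norm_zero] at this
    have h0 : |Real.sin (2 * θ)| = 0 := by linarith
    exact hθ (abs_eq_zero.mp h0)
  rw [geom_sum_eq hz1, norm_div, abs_z_sub_one θ]
  have habs : ‖z‖ = 1 := by
    rw [hz, Complex.norm_exp]
    norm_num
  have hnum : ‖z ^ m - 1‖ ≤ 2 := by
    calc ‖z ^ m - 1‖ ≤ ‖z ^ m‖ + ‖(1:ℂ)‖ := by
          exact norm_sub_le (z ^ m) 1
      _ = 2 := by rw [norm_pow, habs]; norm_num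
  calc ‖z ^ m - 1‖ / (2 * |Real.sin (2 * θ)|)
      ≤ 2 / (2 * |Real.sin (2 * θ)|) := by
        apply div_le_div_of_nonneg_right hnum (by positivity) |>.trans_eq rfl
    _ = 1 / |Real.sin (2 * θ)| := by field_simp

lemma smul_abs (r : ℝ) (w : ℂ) : ‖r • w‖ = |r| * ‖w‖ := by
  rw [Complex.real_smul, norm_mul, Complex.norm_real, Real.norm_eq_abs]

lemma abel_bound (θ : ℝ) (hθ : Real.sin (2 * θ) ≠ 0) (n : ℕ) :
    ‖∑ k ∈ Finset.range (n + 1),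
        ((dseq n k : ℝ) : ℂ) * Complex.exp (4 * k * θ * Complex.I)‖
      ≤ 3 / |Real.sin (2 * θ)| * aseq n := by
  have hs : 0 < |Real.sin (2 * θ)| := abs_pos.mpr hθ
  set s := |Real.sin (2 * θ)| with hsdef
  set z := Complex.exp (4 * θ * Complex.I) with hz
  have hsum : (∑ k ∈ Finset.range (n + 1),
        ((dseq n k : ℝ) : ℂ) * Complex.exp (4 * k * θ * Complex.I))
      = ∑ k ∈ Finset.range (n + 1), dseq n k • z ^ k := by
    apply Finset.sum_congr rfl
    intro k _
    rw [exp_pow, Complex.real_smul]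
  rw [hsum, Finset.sum_range_by_parts (fun i => dseq n i) (fun i => z ^ i) (n + 1)]
  simp only [Nat.add_sub_cancel]
  have hG : ∀ m, ‖∑ i ∈ Finset.range m, z ^ i‖ ≤ 1 / s := geom_bound θ hθ
  have h1 : ‖dseq n n • ∑ i ∈ Finset.range (n + 1), z ^ i
        - ∑ i ∈ Finset.range n, (dseq n (i + 1) - dseq n i) • ∑ j ∈ Finset.range (i + 1), z ^ j‖
      ≤ ‖dseq n n • ∑ i ∈ Finset.range (n + 1), z ^ i‖
        + ‖∑ i ∈ Finset.range n,
            (dseq n (i + 1) - dseq n i) • ∑ j ∈ Finset.range (i + 1), z ^ j‖ := by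
    have := norm_sub_le (dseq n n • ∑ i ∈ Finset.range (n + 1), z ^ i)
      (∑ i ∈ Finset.range n, (dseq n (i + 1) - dseq n i) • ∑ j ∈ Finset.range (i + 1), z ^ j)
    exact this
  have h2 : ‖dseq n n • ∑ i ∈ Finset.range (n + 1), z ^ i‖ ≤ aseq n * (1 / s) := by
    rw [smul_abs, abs_of_nonneg (dseq_pos n n).le, dseq_last]
    exact mul_le_mul_of_nonneg_left (hG (n + 1)) (aseq_pos n).le
  have h3 : ‖∑ i ∈ Finset.range n,
        (dseq n (i + 1) - dseq n i) • ∑ j ∈ Finset.range (i + 1), z ^ j‖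
      ≤ (2 * aseq n) * (1 / s) := by
    calc ‖∑ i ∈ Finset.range n,
          (dseq n (i + 1) - dseq n i) • ∑ j ∈ Finset.range (i + 1), z ^ j‖
        ≤ ∑ i ∈ Finset.range n,
            ‖(dseq n (i + 1) - dseq n i) • ∑ j ∈ Finset.range (i + 1), z ^ j‖ :=
          norm_sum_le _ _
      _ ≤ ∑ i ∈ Finset.range n, |dseq n (i + 1) - dseq n i| * (1 / s) := by
          apply Finset.sum_le_sum
          intro i _
          rw [smul_abs]
          exact mul_le_mul_of_nonneg_left (hG (i + 1)) (abs_nonneg _)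
      _ = (∑ i ∈ Finset.range n, |dseq n (i + 1) - dseq n i|) * (1 / s) := by
          rw [← Finset.sum_mul]
      _ ≤ (2 * aseq n) * (1 / s) := by
          apply mul_le_mul_of_nonneg_right (var_bound n) (by positivity)
  have := h1.trans (add_le_add h2 h3)
  calc ‖_‖ ≤ aseq n * (1 / s) + 2 * aseq n * (1 / s) := this
    _ = 3 / s * aseq n := by field_simp; ring

lemma ratio_bound (θ : ℝ) (hθ : Real.sin (2 * θ) ≠ 0) (n : ℕ) :
    ‖Sseq n θ / Sseq n 0‖ ≤ 12 / |Real.sin (2 * θ)| * aseq n := by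
  have hs : 0 < |Real.sin (2 * θ)| := abs_pos.mpr hθ
  set s := |Real.sin (2 * θ)| with hsdef
  set K : ℝ := (n.factorial : ℝ) ^ 2 * 4 ^ n with hK
  have hKpos : 0 < K := by
    have := Nat.factorial_pos n
    positivity
  have habsK : ‖(n.factorial : ℂ) ^ 2 * 4 ^ n‖ = K := by
    rw [norm_mul, norm_pow, norm_pow, Complex.norm_natCast]
    norm_num [hK]
  have hW0 : Sseq n 0 = (n.factorial : ℂ) ^ 2 * 4 ^ n *
      ((∑ k ∈ Finset.range (n + 1), dseq n k : ℝ) : ℂ) := by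
    rw [Sseq_eq]
    congr 1
    push_cast
    apply Finset.sum_congr rfl
    intro k _
    norm_num
  have hnum : ‖Sseq n θ‖ ≤ K * (3 / s * aseq n) := by
    rw [Sseq_eq, norm_mul, habsK]
    exact mul_le_mul_of_nonneg_left (abel_bound θ hθ n) hKpos.le
  have hsum_pos : 0 < ∑ k ∈ Finset.range (n + 1), dseq n k := by
    apply Finset.sum_pos (fun i _ => dseq_pos n i)
    exact Finset.nonempty_range_add_one
  have hden : K * (1 / 4) ≤ ‖Sseq n 0‖ := by
    rw [hW0, norm_mul, habsK, Complex.norm_real, Real.norm_eq_abs, abs_of_pos hsum_pos]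
    exact mul_le_mul_of_nonneg_left (sum_d_ge n) hKpos.le
  rw [norm_div]
  calc ‖Sseq n θ‖ / ‖Sseq n 0‖
      ≤ (K * (3 / s * aseq n)) / (K * (1 / 4)) := by
        exact div_le_div₀ (mul_nonneg hKpos.le (mul_nonneg (by positivity) (aseq_pos n).le))
          hnum (mul_pos hKpos (by norm_num)) hden
    _ = 12 / s * aseq n := by
        field_simp
        ring

/-- If `sin (2ϑ) ≠ 0` and `p > 2` is real, then the series
`∑_{n≥1} (2n+1) |S_n(ϑ)/S_n(0)|^{2p}` converges. -/
theorem summable_ratio_rpow (θ : ℝ) (hθ : Real.sin (2 * θ) ≠ 0) (p : ℝ) (hp : 2 < p) :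
    Summable (fun n : ℕ =>
      (2 * ((n : ℝ) + 1) + 1) *
        ‖Sseq (n + 1) θ / Sseq (n + 1) 0‖ ^ (2 * p)) := by
  have hs : 0 < |Real.sin (2 * θ)| := abs_pos.mpr hθ
  set s := |Real.sin (2 * θ)| with hsdef
  set B : ℝ := ((12 / s) ^ 2) ^ p with hB
  have hB0 : 0 ≤ B := Real.rpow_nonneg (by positivity) _
  have hp0 : (0:ℝ) ≤ p := by linarith
  have key : ∀ n : ℕ,
      (2 * ((n : ℝ) + 1) + 1) * ‖Sseq (n + 1) θ / Sseq (n + 1) 0‖ ^ (2 * p)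
        ≤ 3 * B * ((n:ℝ) + 1) ^ (1 - p) := by
    intro n
    set r := ‖Sseq (n + 1) θ / Sseq (n + 1) 0‖ with hr
    have hr0 : 0 ≤ r := norm_nonneg _
    have hrb : r ≤ 12 / s * aseq (n + 1) := ratio_bound θ hθ (n + 1)
    have hsq : r ^ 2 ≤ (12 / s) ^ 2 * (1 / ((n:ℝ) + 2)) := by
      have h1 : r ^ 2 ≤ (12 / s) ^ 2 * aseq (n + 1) ^ 2 := by
        calc r ^ 2 ≤ (12 / s * aseq (n + 1)) ^ 2 := pow_le_pow_left₀ hr0 hrb 2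
          _ = (12 / s) ^ 2 * aseq (n + 1) ^ 2 := by ring
      have h2 : aseq (n + 1) ^ 2 ≤ 1 / ((n:ℝ) + 2) := by
        have ha := aseq_sq_le (n + 1)
        push_cast at ha
        rw [le_div_iff₀ (by positivity)]
        nlinarith [sq_nonneg (aseq (n + 1)), Nat.cast_nonneg (α := ℝ) n]
      calc r ^ 2 ≤ (12 / s) ^ 2 * aseq (n + 1) ^ 2 := h1
        _ ≤ (12 / s) ^ 2 * (1 / ((n:ℝ) + 2)) := by
            apply mul_le_mul_of_nonneg_left h2 (by positivity)
    have hrw : r ^ (2 * p) = (r ^ 2 : ℝ) ^ p := by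
      rw [show (2:ℝ) * p = ((2:ℕ):ℝ) * p by norm_num, Real.rpow_mul hr0,
        Real.rpow_natCast]
    have hstep : r ^ (2 * p) ≤ B * ((n:ℝ) + 1) ^ (-p) := by
      rw [hrw]
      calc (r ^ 2) ^ p ≤ ((12 / s) ^ 2 * (1 / ((n:ℝ) + 2))) ^ p :=
            Real.rpow_le_rpow (by positivity) hsq hp0
        _ = B * (1 / ((n:ℝ) + 2)) ^ p := by
            rw [Real.mul_rpow (by positivity) (by positivity)]
        _ ≤ B * (1 / ((n:ℝ) + 1)) ^ p := by
            apply mul_le_mul_of_nonneg_left _ hB0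
            apply Real.rpow_le_rpow (by positivity) _ hp0
            apply one_div_le_one_div_of_le (by positivity)
            linarith
        _ = B * ((n:ℝ) + 1) ^ (-p) := by
            rw [one_div, Real.inv_rpow (by positivity), ← Real.rpow_neg (by positivity)]
    calc (2 * ((n:ℝ) + 1) + 1) * r ^ (2 * p)
        ≤ (2 * ((n:ℝ) + 1) + 1) * (B * ((n:ℝ) + 1) ^ (-p)) := by
          apply mul_le_mul_of_nonneg_left hstep (by positivity)
      _ ≤ (3 * ((n:ℝ) + 1)) * (B * ((n:ℝ) + 1) ^ (-p)) := by
          apply mul_le_mul_of_nonneg_right _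
            (mul_nonneg hB0 (Real.rpow_nonneg (by positivity) _))
          have := Nat.cast_nonneg (α := ℝ) n
          linarith
      _ = 3 * B * (((n:ℝ) + 1) * ((n:ℝ) + 1) ^ (-p)) := by ring
      _ = 3 * B * ((n:ℝ) + 1) ^ (1 - p) := by
          congr 1
          rw [show (1:ℝ) - p = 1 + -p by ring, Real.rpow_add (by positivity),
            Real.rpow_one]
  have hsum : Summable (fun n : ℕ => 3 * B * ((n:ℝ) + 1) ^ (1 - p)) := by
    apply Summable.mul_left
    have h0 : Summable (fun n : ℕ => (n:ℝ) ^ (1 - p)) :=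
      Real.summable_nat_rpow.mpr (by linarith)
    have h1 := (summable_nat_add_iff 1).mpr h0
    have : (fun n : ℕ => (((n + 1 : ℕ) : ℝ)) ^ (1 - p))
        = fun n : ℕ => ((n:ℝ) + 1) ^ (1 - p) := by
      funext n; push_cast; ring_nf
    rwa [this] at h1
  apply Summable.of_nonneg_of_le _ key hsum
  intro n
  exact mul_nonneg (by positivity) (Real.rpow_nonneg (norm_nonneg _) _)
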